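/- arXiv:1306.4285 — 12 statements merged into one kernel-verified Lean document; each statement's English description precedes it below -/
import Mathlib

section
/- Let (V,φ) be a finite-dimensional bilinear space and U, W subspaces with V = U ⊥ W (i.e. V = U ⊕ W, φ(U,W) = 0 = φ(W,U)). Then for every k ≥ 1, L^k_V(V) = L^k_U(U) ⊕ L^k_W(W) and R^k_V(V) = R^k_U(U) ⊕ R^k_W(W), where the operators L, R on each space assign to a subspace its left (resp. right) orthogonal complement with respect to the restricted form. -/
variable {F V : Type*} [Field F] [AddCommGroup V] [Module F V]

/-- Left orthogonal complement of a subspace with respect to a bilinear form. -/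
def Lc (φ : V →ₗ[F] V →ₗ[F] F) (U : Submodule F V) : Submodule F V where
  carrier := {v | ∀ u ∈ U, φ v u = 0}
  add_mem' := by
    intro a b ha hb u hu
    simp [map_add, ha u hu, hb u hu]
  zero_mem' := by intro u hu; simp
  smul_mem' := by
    intro c a ha u hu
    simp [ha u hu]

/-- Right orthogonal complement of a subspace with respect to a bilinear form. -/
def Rc (φ : V →ₗ[F] V →ₗ[F] F) (U : Submodule F V) : Submodule F V where
  carrier := {v | ∀ u ∈ U, φ u v = 0}
  add_mem' := by
    intro a b ha hb u hu
    simp [map_add, ha u hu, hb u hu]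
  zero_mem' := by intro u hu; simp
  smul_mem' := by
    intro c a ha u hu
    simp [ha u hu]

/-- The odd alternating iterates `L^{2k+1}(V) = L(R(L(...(V))))`. -/
def Lodd (φ : V →ₗ[F] V →ₗ[F] F) : ℕ → Submodule F V
  | 0 => Lc φ ⊤
  | k + 1 => Lc φ (Rc φ (Lodd φ k))

/-- The odd alternating iterates `R^{2k+1}(V) = R(L(R(...(V))))`. -/
def Rodd (φ : V →ₗ[F] V →ₗ[F] F) : ℕ → Submodule F V
  | 0 => Rc φ ⊤
  | k + 1 => Rc φ (Lc φ (Rodd φ k))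

/-- `V_∞ = L_∞(V) + R_∞(V)`. -/
def Vinf (φ : V →ₗ[F] V →ₗ[F] F) : Submodule F V :=
  (⨆ k, Lodd φ k) ⊔ (⨆ k, Rodd φ k)

/-- `g` is an isometry of the bilinear space `(V, φ)`. -/
def IsIsom (φ : V →ₗ[F] V →ₗ[F] F) (g : V ≃ₗ[F] V) : Prop :=
  ∀ v w : V, φ (g v) (g w) = φ v w

lemma mem_Lc {φ : V →ₗ[F] V →ₗ[F] F} {S : Submodule F V} {v : V} :
    v ∈ Lc φ S ↔ ∀ u ∈ S, φ v u = 0 := Iff.rfl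

lemma Rc_eq_Lc_flip (φ : V →ₗ[F] V →ₗ[F] F) : Rc φ = Lc φ.flip := by
  funext S; ext v; rfl

lemma flip_compl₁₂ (φ : V →ₗ[F] V →ₗ[F] F) {U : Submodule F V} :
    (φ.compl₁₂ U.subtype U.subtype).flip = φ.flip.compl₁₂ U.subtype U.subtype := by
  ext; rfl

lemma Lc_sup_map (φ : V →ₗ[F] V →ₗ[F] F) (U W : Submodule F V)
    (hcompl : IsCompl U W)
    (horth : ∀ u ∈ U, ∀ w ∈ W, φ u w = 0 ∧ φ w u = 0)
    (A : Submodule F U) (B : Submodule F W) :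
    Lc φ (A.map U.subtype ⊔ B.map W.subtype) =
      (Lc (φ.compl₁₂ U.subtype U.subtype) A).map U.subtype ⊔
        (Lc (φ.compl₁₂ W.subtype W.subtype) B).map W.subtype := by
  ext v
  constructor
  · intro hv
    have hdec : ∃ u ∈ U, ∃ w ∈ W, u + w = v := by
      have := hcompl.codisjoint.eq_top
      have hv' : v ∈ U ⊔ W := by rw [this]; trivial
      exact Submodule.mem_sup.mp hv'
    obtain ⟨u, hu, w, hw, huw⟩ := hdec
    rw [Submodule.mem_sup]
    refine ⟨u, ?_, w, ?_, huw⟩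
    · rw [Submodule.mem_map]
      refine ⟨⟨u, hu⟩, ?_, rfl⟩
      intro a ha
      have hva : φ v (U.subtype a) = 0 := hv _ (Submodule.mem_sup_left ⟨a, ha, rfl⟩)
      have hwa : φ w (U.subtype a) = 0 := (horth _ a.2 w hw).2
      have : φ v (U.subtype a) = φ u (U.subtype a) + φ w (U.subtype a) := by
        rw [← huw]; simp
      simp only [LinearMap.compl₁₂_apply]
      rw [this, hwa, add_zero] at hva
      exact hva
    · rw [Submodule.mem_map]
      refine ⟨⟨w, hw⟩, ?_, rfl⟩
      intro b hb
      have hvb : φ v (W.subtype b) = 0 := hv _ (Submodule.mem_sup_right ⟨b, hb, rfl⟩)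
      have hub : φ u (W.subtype b) = 0 := (horth u hu _ b.2).1
      have : φ v (W.subtype b) = φ u (W.subtype b) + φ w (W.subtype b) := by
        rw [← huw]; simp
      simp only [LinearMap.compl₁₂_apply]
      rw [this, hub, zero_add] at hvb
      exact hvb
  · intro hv x hx
    rw [Submodule.mem_sup] at hv
    obtain ⟨u, hu, w, hw, huw⟩ := hv
    rw [Submodule.mem_sup] at hx
    obtain ⟨a, ha, b, hb, hab⟩ := hx
    rw [Submodule.mem_map] at hu hw ha hb
    obtain ⟨u', hu', rfl⟩ := hu
    obtain ⟨w', hw', rfl⟩ := hw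
    obtain ⟨a', ha', rfl⟩ := ha
    obtain ⟨b', hb', rfl⟩ := hb
    have h1 : φ (U.subtype u') (U.subtype a') = 0 := hu' a' ha'
    have h2 : φ (W.subtype w') (W.subtype b') = 0 := hw' b' hb'
    have h3 : φ (U.subtype u') (W.subtype b') = 0 :=
      (horth _ u'.2 _ b'.2).1
    have h4 : φ (W.subtype w') (U.subtype a') = 0 :=
      (horth _ a'.2 _ w'.2).2
    rw [← huw, ← hab]
    simp only [Submodule.subtype_apply] at h1 h2 h3 h4
    simp [h1, h2, h3, h4]

lemma Lc_iter_decomp (φ : V →ₗ[F] V →ₗ[F] F) (U W : Submodule F V)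
    (hcompl : IsCompl U W)
    (horth : ∀ u ∈ U, ∀ w ∈ W, φ u w = 0 ∧ φ w u = 0) :
    ∀ k : ℕ, (Lc φ)^[k + 1] ⊤ =
      (((Lc (φ.compl₁₂ U.subtype U.subtype))^[k + 1] ⊤).map U.subtype) ⊔
        (((Lc (φ.compl₁₂ W.subtype W.subtype))^[k + 1] ⊤).map W.subtype) := by
  intro k
  induction k with
  | zero =>
      have htop : (⊤ : Submodule F V) =
          (⊤ : Submodule F U).map U.subtype ⊔ (⊤ : Submodule F W).map W.subtype := by
        rw [Submodule.map_top, Submodule.map_top, Submodule.range_subtype,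
          Submodule.range_subtype, hcompl.codisjoint.eq_top]
      simp only [Nat.zero_add, Function.iterate_one]
      rw [htop, Lc_sup_map φ U W hcompl horth]
  | succ n ih =>
      rw [Function.iterate_succ_apply' (Lc φ), ih, Lc_sup_map φ U W hcompl horth,
        Function.iterate_succ_apply' (Lc (φ.compl₁₂ U.subtype U.subtype)) (n + 1),
        Function.iterate_succ_apply' (Lc (φ.compl₁₂ W.subtype W.subtype)) (n + 1)]

theorem iterated_orthogonal_of_orthogonal_direct_sum
    (φ : V →ₗ[F] V →ₗ[F] F) (U W : Submodule F V)
    (hcompl : IsCompl U W)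
    (horth : ∀ u ∈ U, ∀ w ∈ W, φ u w = 0 ∧ φ w u = 0) :
    ∀ k : ℕ, 1 ≤ k →
      ((Lc φ)^[k] ⊤ =
          (((Lc (φ.compl₁₂ U.subtype U.subtype))^[k] ⊤).map U.subtype) ⊔
          (((Lc (φ.compl₁₂ W.subtype W.subtype))^[k] ⊤).map W.subtype) ∧
        Disjoint (((Lc (φ.compl₁₂ U.subtype U.subtype))^[k] ⊤).map U.subtype)
          (((Lc (φ.compl₁₂ W.subtype W.subtype))^[k] ⊤).map W.subtype)) ∧
      ((Rc φ)^[k] ⊤ =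
          (((Rc (φ.compl₁₂ U.subtype U.subtype))^[k] ⊤).map U.subtype) ⊔
          (((Rc (φ.compl₁₂ W.subtype W.subtype))^[k] ⊤).map W.subtype) ∧
        Disjoint (((Rc (φ.compl₁₂ U.subtype U.subtype))^[k] ⊤).map U.subtype)
          (((Rc (φ.compl₁₂ W.subtype W.subtype))^[k] ⊤).map W.subtype)) := by
  intro k hk
  obtain ⟨n, rfl⟩ : ∃ n, k = n + 1 := ⟨k - 1, (Nat.succ_pred_eq_of_pos hk).symm⟩
  have hdisj : ∀ (A : Submodule F U) (B : Submodule F W),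
      Disjoint (A.map U.subtype) (B.map W.subtype) := fun A B =>
    hcompl.disjoint.mono (Submodule.map_subtype_le U A) (Submodule.map_subtype_le W B)
  have horth' : ∀ u ∈ U, ∀ w ∈ W, φ.flip u w = 0 ∧ φ.flip w u = 0 := by
    intro u hu w hw
    exact ⟨(horth u hu w hw).2, (horth u hu w hw).1⟩
  refine ⟨⟨Lc_iter_decomp φ U W hcompl horth n, hdisj _ _⟩, ⟨?_, hdisj _ _⟩⟩
  rw [Rc_eq_Lc_flip φ, Rc_eq_Lc_flip (φ.compl₁₂ U.subtype U.subtype),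
    Rc_eq_Lc_flip (φ.compl₁₂ W.subtype W.subtype), flip_compl₁₂, flip_compl₁₂]
  exact Lc_iter_decomp φ.flip U W hcompl horth' n
end

section
/- Let W be an F-vector space with basis f_k^p indexed by 1 ≤ k ≤ s, 1 ≤ p ≤ m, and for each p set E^p = f_1^p + f_2^p + ... + f_s^p. Suppose g ∈ End_F(W) preserves each subspace span(f_k^1, ..., f_k^m) for 1 ≤ k ≤ s, preserves the subspace span(E^1, ..., E^m), and fixes each of f_1^1, ..., f_1^m. Then g is the identity on W. -/
theorem endomorphism_fixing_layers_and_diagonal_is_id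
    {F W : Type*} [Field F] [AddCommGroup W] [Module F W]
    (s m : ℕ) (hs : 0 < s)
    (f : Module.Basis (Fin s × Fin m) F W) (g : W →ₗ[F] W)
    (hlayers : ∀ k : Fin s,
      ∀ x ∈ Submodule.span F (Set.range fun p : Fin m => f (k, p)),
        g x ∈ Submodule.span F (Set.range fun p : Fin m => f (k, p)))
    (hE : ∀ x ∈ Submodule.span F
        (Set.range fun p : Fin m => ∑ k : Fin s, f (k, p)),
      g x ∈ Submodule.span F
        (Set.range fun p : Fin m => ∑ k : Fin s, f (k, p)))
    (hfix : ∀ p : Fin m, g (f (⟨0, hs⟩, p)) = f (⟨0, hs⟩, p)) :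
    g = LinearMap.id := by
  have hb : ∀ k p, ∃ b : Fin m → F, ∑ q, b q • f (k, q) = g (f (k, p)) := by
    intro k p
    exact (Submodule.mem_span_range_iff_exists_fun F).mp
      (hlayers k (f (k, p)) (Submodule.subset_span ⟨p, rfl⟩))
  choose b hbeq using hb
  have hc : ∀ p, ∃ c : Fin m → F,
      ∑ q, c q • (∑ k : Fin s, f (k, q)) = g (∑ k : Fin s, f (k, p)) := by
    intro p
    exact (Submodule.mem_span_range_iff_exists_fun F).mp
      (hE _ (Submodule.subset_span ⟨p, rfl⟩))
  choose c hceq using hc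
  have hrepr_b : ∀ k p k' q, f.repr (g (f (k, p))) (k', q) =
      if k' = k then b k p q else 0 := by
    intro k p k' q
    rw [← hbeq k p, map_sum]
    simp only [map_smul, f.repr_self, Finset.sum_apply', Finsupp.smul_apply,
      Finsupp.single_apply, Prod.mk.injEq, smul_eq_mul]
    by_cases h : k' = k
    · subst h
      simp [eq_comm]
    · rw [if_neg h, Finset.sum_eq_zero]
      intro q' _
      rw [if_neg, mul_zero]
      rintro ⟨h1, -⟩
      exact h h1.symm
  have key : ∀ k p q, b k p q = c p q := by
    intro k p q
    have h1 : f.repr (g (∑ k : Fin s, f (k, p))) (k, q) = b k p q := by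
      rw [map_sum, map_sum, Finset.sum_apply']
      rw [Finset.sum_eq_single k (fun k' _ hk' => by rw [hrepr_b, if_neg (Ne.symm hk')])
        (by simp)]
      rw [hrepr_b, if_pos rfl]
    have h2 : f.repr (∑ q', c p q' • (∑ k : Fin s, f (k, q'))) (k, q) = c p q := by
      simp only [map_sum, map_smul, f.repr_self, Finset.sum_apply', Finsupp.smul_apply,
        Finsupp.single_apply, Prod.mk.injEq, smul_eq_mul]
      rw [Finset.sum_eq_single q (fun q' _ hq' => by
          rw [Finset.sum_eq_zero, mul_zero]
          intro k' _
          rw [if_neg]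
          rintro ⟨-, h2⟩
          exact hq' h2)
        (by simp)]
      rw [Finset.sum_eq_single k (fun k' _ hk' => by
          rw [if_neg]; rintro ⟨h1, -⟩; exact hk' h1)
        (by simp)]
      simp
    rw [← h1, ← hceq p, h2]
  have hb0 : ∀ p q, b ⟨0, hs⟩ p q = if p = q then 1 else 0 := by
    intro p q
    have := hrepr_b ⟨0, hs⟩ p ⟨0, hs⟩ q
    rw [hfix p, f.repr_self, Finsupp.single_apply, if_pos rfl] at this
    rw [← this]
    simp [Prod.ext_iff, eq_comm]
  have hgf : ∀ k p, g (f (k, p)) = f (k, p) := by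
    intro k p
    rw [← hbeq k p]
    have hbk : ∀ q, b k p q = if p = q then 1 else 0 := by
      intro q; rw [key k p q, ← key ⟨0, hs⟩ p q, hb0]
    simp only [hbk, ite_smul, one_smul, zero_smul]
    simp
  apply f.ext
  rintro ⟨k, p⟩
  simpa using hgf k p
end

section
/- Let (W,φ) be a finite-dimensional bilinear space over a field F and suppose Y and Z are totally isotropic subspaces of W, invariant under the isometry group G(W,φ), such that W = Y ⊕ Z and the restriction of φ to Z × Y is non-degenerate. Then: (1) there exists a unique u ∈ End_F(Y) with φ(y,z) = φ(z, u y) for all y ∈ Y, z ∈ Z; (2) for every g ∈ G(W,φ), the restriction g|_Y commutes with u; (3) the restriction map ρ : G(W,φ) → C_{GL(Y)}(u), g ↦ g|_Y, is a group isomorphism onto the centralizer of u in GL(Y). -/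
variable {F V : Type*} [Field F] [AddCommGroup V] [Module F V]

open Module in
theorem isometry_group_of_split_totally_isotropic_pair
    [FiniteDimensional F V] (φ : V →ₗ[F] V →ₗ[F] F)
    (Y Z : Submodule F V)
    (hYiso : ∀ y ∈ Y, ∀ y' ∈ Y, φ y y' = 0)
    (hZiso : ∀ z ∈ Z, ∀ z' ∈ Z, φ z z' = 0)
    (hGY : ∀ g : V ≃ₗ[F] V, IsIsom φ g → ∀ y ∈ Y, g y ∈ Y)
    (hGZ : ∀ g : V ≃ₗ[F] V, IsIsom φ g → ∀ z ∈ Z, g z ∈ Z)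
    (hcompl : IsCompl Y Z)
    (hndr : ∀ z : Z, (∀ y : Y, φ (z : V) (y : V) = 0) → z = 0)
    (hndl : ∀ y : Y, (∀ z : Z, φ (z : V) (y : V) = 0) → y = 0) :
    (∃! u : Module.End F Y,
      ∀ (y : Y) (z : Z), φ (y : V) (z : V) = φ (z : V) ((u y : Y) : V)) ∧
    (∀ u : Module.End F Y,
      (∀ (y : Y) (z : Z), φ (y : V) (z : V) = φ (z : V) ((u y : Y) : V)) →
      (∀ g : V ≃ₗ[F] V, IsIsom φ g →
        ∀ b : Y ≃ₗ[F] Y, (∀ y : Y, ((b y : Y) : V) = g (y : V)) →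
          ∀ y : Y, u (b y) = b (u y)) ∧
      (∀ g₁ g₂ : V ≃ₗ[F] V, IsIsom φ g₁ → IsIsom φ g₂ →
        (∀ y ∈ Y, g₁ y = g₂ y) → g₁ = g₂) ∧
      (∀ b : Y ≃ₗ[F] Y, (∀ y : Y, u (b y) = b (u y)) →
        ∃ g : V ≃ₗ[F] V, IsIsom φ g ∧ ∀ y : Y, g (y : V) = ((b y : Y) : V))) := by
  classical
  set p : Z →ₗ[F] Module.Dual F Y := LinearMap.domRestrict₁₂ φ Z Y with hp
  have hpinj : Function.Injective p := by
    rw [injective_iff_map_eq_zero]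
    intro z hz
    exact hndr z fun y => by simpa [hp, LinearMap.domRestrict₁₂_apply] using LinearMap.congr_fun hz y
  have hqinj : Function.Injective p.flip := by
    rw [injective_iff_map_eq_zero]
    intro y hy
    exact hndl y fun z => by simpa [hp, LinearMap.domRestrict₁₂_apply] using LinearMap.congr_fun hy z
  have hd1 : finrank F Z = finrank F (Module.Dual F Y) := by
    have h1 := LinearMap.finrank_le_finrank_of_injective hpinj
    have h2 := LinearMap.finrank_le_finrank_of_injective hqinj
    rw [Subspace.dual_finrank_eq] at *
    omega
  have hd2 : finrank F Y = finrank F (Module.Dual F Z) := by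
    rw [Subspace.dual_finrank_eq, ← Subspace.dual_finrank_eq (V := Y), hd1]
  set e : Z ≃ₗ[F] Module.Dual F Y := p.linearEquivOfInjective hpinj hd1 with he
  set e' : Y ≃ₗ[F] Module.Dual F Z := p.flip.linearEquivOfInjective hqinj hd2 with he'
  have he1 : ∀ (z : Z) (y : Y), e z y = φ z y := fun z y => by
    rw [he, LinearMap.linearEquivOfInjective_apply]; rfl
  have he2 : ∀ (y : Y) (z : Z), e' y z = φ z y := fun y z => by
    rw [he', LinearMap.linearEquivOfInjective_apply]; rfl
  -- agreement lemmas
  have hYeq : ∀ y₁ y₂ : Y, (∀ z : Z, φ (z : V) (y₁ : V) = φ (z : V) (y₂ : V)) → y₁ = y₂ := by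
    intro y₁ y₂ h
    have h0 := hndl (y₁ - y₂) (fun z => by
      rw [Submodule.coe_sub, map_sub, h z, sub_self])
    exact sub_eq_zero.mp h0
  have hZeq : ∀ z₁ z₂ : Z, (∀ y : Y, φ (z₁ : V) (y : V) = φ (z₂ : V) (y : V)) → z₁ = z₂ := by
    intro z₁ z₂ h
    have h0 := hndr (z₁ - z₂) (fun y => by
      rw [Submodule.coe_sub, map_sub, LinearMap.sub_apply, h y, sub_self])
    exact sub_eq_zero.mp h0
  have hsymm : ∀ g : V ≃ₗ[F] V, IsIsom φ g → IsIsom φ g.symm := by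
    intro g hg v w
    conv_rhs => rw [← g.apply_symm_apply v, ← g.apply_symm_apply w]
    exact (hg _ _).symm
  -- the endomorphism u
  set u : Module.End F Y :=
    (e'.symm : Module.Dual F Z →ₗ[F] Y) ∘ₗ LinearMap.domRestrict₁₂ φ Y Z with hu
  have huprop : ∀ (y : Y) (z : Z), φ (y : V) (z : V) = φ (z : V) ((u y : Y) : V) := by
    intro y z
    have h1 : e' (u y) = LinearMap.domRestrict₁₂ φ Y Z y := e'.apply_symm_apply _
    calc φ (y : V) (z : V) = LinearMap.domRestrict₁₂ φ Y Z y z := rfl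
      _ = e' (u y) z := by rw [h1]
      _ = φ (z : V) ((u y : Y) : V) := he2 _ _
  constructor
  · refine ⟨u, huprop, ?_⟩
    intro u' h'
    apply LinearMap.ext
    intro y
    apply hYeq
    intro z
    rw [← h' y z, ← huprop y z]
  · intro u0 hu0
    refine ⟨?_, ?_, ?_⟩
    · -- commuting
      intro g hg b hb y
      apply hYeq
      intro z
      have hz' : g.symm (z : V) ∈ Z := hGZ g.symm (hsymm g hg) z z.2
      set z' : Z := ⟨g.symm z, hz'⟩ with hz'def
      have hgz' : g (z' : V) = z := g.apply_symm_apply z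
      calc φ (z : V) ((u0 (b y) : Y) : V) = φ ((b y : Y) : V) (z : V) := (hu0 (b y) z).symm
        _ = φ (g (y : V)) (g (z' : V)) := by rw [hb y, hgz']
        _ = φ (y : V) (z' : V) := hg _ _
        _ = φ (z' : V) ((u0 y : Y) : V) := hu0 y z'
        _ = φ (g (z' : V)) (g ((u0 y : Y) : V)) := (hg _ _).symm
        _ = φ (z : V) ((b (u0 y) : Y) : V) := by rw [hgz', hb (u0 y)]
    · -- injectivity
      intro g₁ g₂ h1 h2 hagree
      have hZag : ∀ z : Z, g₁ (z : V) = g₂ (z : V) := by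
        intro z
        have m1 : g₁ (z : V) ∈ Z := hGZ g₁ h1 z z.2
        have m2 : g₂ (z : V) ∈ Z := hGZ g₂ h2 z z.2
        have key : (⟨g₁ z, m1⟩ : Z) = ⟨g₂ z, m2⟩ := by
          apply hZeq
          intro y
          have hy1 : g₁.symm (y : V) ∈ Y := hGY g₁.symm (hsymm g₁ h1) y y.2
          set y₁ : Y := ⟨g₁.symm y, hy1⟩ with hy1def
          have hgy1 : g₁ (y₁ : V) = y := g₁.apply_symm_apply y
          calc φ (g₁ (z : V)) (y : V) = φ (g₁ z) (g₁ y₁) := by rw [hgy1]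
            _ = φ (z : V) (y₁ : V) := h1 _ _
            _ = φ (g₂ z) (g₂ y₁) := (h2 _ _).symm
            _ = φ (g₂ (z : V)) (y : V) := by rw [← hagree (y₁ : V) hy1, hgy1]
        exact Subtype.ext_iff.mp key
      apply LinearEquiv.ext
      intro v
      obtain ⟨⟨y, z⟩, rfl⟩ := (Submodule.prodEquivOfIsCompl Y Z hcompl).surjective v
      rw [Submodule.coe_prodEquivOfIsCompl']
      simp only [map_add]
      rw [hagree y y.2, hZag z]
    · -- surjectivity
      intro b hcomm
      set c : Z ≃ₗ[F] Z := (e.trans b.symm.dualMap).trans e.symm with hcdef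
      have hc : ∀ (z : Z) (y : Y), φ ((c z : Z) : V) (y : V) = φ (z : V) ((b.symm y : Y) : V) := by
        intro z y
        have h1 : e (c z) = b.symm.dualMap (e z) := e.apply_symm_apply _
        calc φ ((c z : Z) : V) (y : V) = e (c z) y := (he1 _ _).symm
          _ = (e z) (b.symm y) := by rw [h1]; rfl
          _ = φ (z : V) ((b.symm y : Y) : V) := he1 _ _
      set g : V ≃ₗ[F] V :=
        ((Submodule.prodEquivOfIsCompl Y Z hcompl).symm.trans
          ((b.prodCongr c).trans (Submodule.prodEquivOfIsCompl Y Z hcompl))) with hgdef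
      have hgapp : ∀ (y : Y) (z : Z),
          g ((y : V) + (z : V)) = ((b y : Y) : V) + ((c z : Z) : V) := by
        intro y z
        have h0 : ((y : V) + (z : V)) = Submodule.prodEquivOfIsCompl Y Z hcompl (y, z) :=
          (Submodule.coe_prodEquivOfIsCompl' Y Z hcompl (y, z)).symm
        rw [hgdef, h0]
        show (Submodule.prodEquivOfIsCompl Y Z hcompl)
          ((b.prodCongr c) ((Submodule.prodEquivOfIsCompl Y Z hcompl).symm
            (Submodule.prodEquivOfIsCompl Y Z hcompl (y, z)))) = _
        rw [LinearEquiv.symm_apply_apply]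
        rfl
      have hgiso : IsIsom φ g := by
        intro v w
        obtain ⟨⟨y, z⟩, rfl⟩ := (Submodule.prodEquivOfIsCompl Y Z hcompl).surjective v
        obtain ⟨⟨y', z'⟩, rfl⟩ := (Submodule.prodEquivOfIsCompl Y Z hcompl).surjective w
        rw [Submodule.coe_prodEquivOfIsCompl', Submodule.coe_prodEquivOfIsCompl',
          hgapp, hgapp]
        have kbb : φ ((b y : Y) : V) ((b y' : Y) : V) = 0 := hYiso _ (b y).2 _ (b y').2
        have kcc : φ ((c z : Z) : V) ((c z' : Z) : V) = 0 := hZiso _ (c z).2 _ (c z').2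
        have kyy : φ (y : V) (y' : V) = 0 := hYiso _ y.2 _ y'.2
        have kzz : φ (z : V) (z' : V) = 0 := hZiso _ z.2 _ z'.2
        have kcb : φ ((c z : Z) : V) ((b y' : Y) : V) = φ (z : V) (y' : V) := by
          rw [hc z (b y'), b.symm_apply_apply]
        have kbc : φ ((b y : Y) : V) ((c z' : Z) : V) = φ (y : V) (z' : V) := by
          calc φ ((b y : Y) : V) ((c z' : Z) : V)
              = φ ((c z' : Z) : V) ((u0 (b y) : Y) : V) := hu0 (b y) (c z')
            _ = φ ((c z' : Z) : V) ((b (u0 y) : Y) : V) := by rw [hcomm y]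
            _ = φ (z' : V) ((b.symm (b (u0 y)) : Y) : V) := hc z' (b (u0 y))
            _ = φ (z' : V) ((u0 y : Y) : V) := by rw [b.symm_apply_apply]
            _ = φ (y : V) (z' : V) := (hu0 y z').symm
        simp only [map_add, LinearMap.add_apply]
        rw [kbb, kcc, kyy, kzz, kcb, kbc]
      refine ⟨g, hgiso, ?_⟩
      intro y
      have h0 := hgapp y 0
      simpa using h0
end

section
/- Let (V,φ) be a non-degenerate bilinear space over F with asymmetry σ (so φ(y,x) = φ(x,σy)), and let p_σ be the minimal polynomial of σ. Then the symmetric form φ⁺ = φ + φ' is non-degenerate if and only if p_σ(−1) ≠ 0, and the alternating form φ⁻ = φ − φ' is non-degenerate if and only if p_σ(1) ≠ 0. -/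
variable {F V : Type*} [Field F] [AddCommGroup V] [Module F V]

theorem symmetric_alternating_parts_nondegenerate_iff_minpoly
    [FiniteDimensional F V] (φ : V →ₗ[F] V →ₗ[F] F)
    (hndl : ∀ v : V, (∀ w : V, φ v w = 0) → v = 0)
    (hndr : ∀ v : V, (∀ w : V, φ w v = 0) → v = 0)
    (σ : V ≃ₗ[F] V) (hσ : ∀ x y : V, φ y x = φ x (σ y)) :
    ((∀ v : V, (∀ w : V, (φ + φ.flip) v w = 0) → v = 0) ↔
      (minpoly F (σ.toLinearMap : Module.End F V)).eval (-1) ≠ 0) ∧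
    ((∀ v : V, (∀ w : V, (φ - φ.flip) v w = 0) → v = 0) ↔
      (minpoly F (σ.toLinearMap : Module.End F V)).eval 1 ≠ 0) := by

  set f := (σ.toLinearMap : Module.End F V) with hf
  constructor
  · constructor
    · intro hnd hroot
      obtain ⟨w, hw⟩ := Module.End.HasEigenvalue.exists_hasEigenvector
        ((Module.End.hasEigenvalue_iff_isRoot).mpr hroot)
      have hsw : σ w = -w := by
        have := hw.apply_eq_smul
        simpa [hf] using this
      exact hw.right (hnd w (fun v => by
        simp [LinearMap.add_apply, LinearMap.flip_apply, hσ v w, hsw,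
          ← map_add (φ v)]))
    · intro hne v hv
      have hinj : Function.Injective (f + 1 : Module.End F V) := by
        rw [← LinearMap.ker_eq_bot, LinearMap.ker_eq_bot']
        intro x hx
        by_contra hx0
        have hev : Module.End.HasEigenvalue f (-1) := by
          apply Module.End.hasEigenvalue_of_hasEigenvector (x := x)
          constructor
          · rw [Module.End.mem_eigenspace_iff]
            have : f x + x = 0 := by simpa [LinearMap.add_apply] using hx
            have : f x = -x := by linear_combination (norm := module) this
            simpa using this
          · exact hx0
        exact hne ((Module.End.hasEigenvalue_iff_isRoot).mp hev)
      have hsurj := (LinearMap.injective_iff_surjective).mp hinj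
      apply hndl v
      intro w
      obtain ⟨u, hu⟩ := hsurj w
      have h1 : φ v u + φ v (σ u) = 0 := by
        have := hv u
        simp only [LinearMap.add_apply, LinearMap.flip_apply] at this
        rwa [hσ v u] at this
      have h2 : φ v (u + σ u) = 0 := by rw [map_add]; exact h1
      have : w = u + σ u := by
        rw [← hu]; simp [LinearMap.add_apply, hf]; abel
      rw [this]; exact h2
  · constructor
    · intro hnd hroot
      obtain ⟨w, hw⟩ := Module.End.HasEigenvalue.exists_hasEigenvector
        ((Module.End.hasEigenvalue_iff_isRoot).mpr hroot)
      have hsw : σ w = w := by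
        have := hw.apply_eq_smul
        simpa [hf] using this
      exact hw.right (hnd w (fun v => by
        simp [LinearMap.sub_apply, LinearMap.flip_apply, hσ v w, hsw]))
    · intro hne v hv
      have hinj : Function.Injective (f - 1 : Module.End F V) := by
        rw [← LinearMap.ker_eq_bot, LinearMap.ker_eq_bot']
        intro x hx
        by_contra hx0
        have hev : Module.End.HasEigenvalue f 1 := by
          apply Module.End.hasEigenvalue_of_hasEigenvector (x := x)
          constructor
          · rw [Module.End.mem_eigenspace_iff]
            have : f x - x = 0 := by simpa [LinearMap.sub_apply] using hx
            have : f x = x := by linear_combination (norm := module) this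
            simpa using this
          · exact hx0
        exact hne ((Module.End.hasEigenvalue_iff_isRoot).mp hev)
      have hsurj := (LinearMap.injective_iff_surjective).mp hinj
      apply hndl v
      intro w
      obtain ⟨u, hu⟩ := hsurj w
      have h1 : φ v u - φ v (σ u) = 0 := by
        have := hv u
        simp only [LinearMap.sub_apply, LinearMap.flip_apply] at this
        rwa [hσ v u] at this
      have h2 : φ v (σ u - u) = 0 := by
        rw [map_sub]
        linear_combination -h1
      have : w = σ u - u := by
        rw [← hu]; simp [LinearMap.sub_apply, hf]
      rw [this]; exact h2
end

section
/- Let (V,φ) be a non-degenerate bilinear space with asymmetry σ, and suppose φ⁺ = φ + φ' is non-degenerate. Let σ^{+-} be the unique endomorphism with φ⁻(x,y) = φ⁺(x, σ^{+-} y) for all x,y. Then σ^{+-} lies in the orthogonal Lie algebra of φ⁺, i.e. φ⁺(σ^{+-} x, y) + φ⁺(x, σ^{+-} y) = 0 for all x, y ∈ V. Similarly, if φ⁻ = φ − φ' is non-degenerate and σ^{-+} satisfies φ⁺(x,y) = φ⁻(x, σ^{-+} y), then φ⁻(σ^{-+} x, y) + φ⁻(x, σ^{-+} y) = 0 for all x,y.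 -/
variable {F V : Type*} [Field F] [AddCommGroup V] [Module F V]

theorem asymmetry_parts_in_lie_algebras
    [FiniteDimensional F V] (φ : V →ₗ[F] V →ₗ[F] F)
    (hndl : ∀ v : V, (∀ w : V, φ v w = 0) → v = 0)
    (hndr : ∀ v : V, (∀ w : V, φ w v = 0) → v = 0) :
    (∀ s : V →ₗ[F] V,
      (∀ v : V, (∀ w : V, (φ + φ.flip) v w = 0) → v = 0) →
      (∀ x y : V, (φ - φ.flip) x y = (φ + φ.flip) x (s y)) →
      ∀ x y : V, (φ + φ.flip) (s x) y + (φ + φ.flip) x (s y) = 0) ∧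
    (∀ t : V →ₗ[F] V,
      (∀ v : V, (∀ w : V, (φ - φ.flip) v w = 0) → v = 0) →
      (∀ x y : V, (φ + φ.flip) x y = (φ - φ.flip) x (t y)) →
      ∀ x y : V, (φ - φ.flip) (t x) y + (φ - φ.flip) x (t y) = 0) := by
  constructor
  · intro s _ hs x y
    have h1 := hs y x
    have h2 := hs x y
    simp only [LinearMap.add_apply, LinearMap.sub_apply, LinearMap.flip_apply] at *
    linear_combination -h1 - h2
  · intro t _ ht x y
    have h1 := ht y x
    have h2 := ht x y
    simp only [LinearMap.add_apply, LinearMap.sub_apply, LinearMap.flip_apply] at *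
    linear_combination h1 - h2
end

section
/- Let (V,φ) be a non-degenerate bilinear space over a field F such that φ⁺ = φ + φ' is non-degenerate. Let σ⁺ be the unique endomorphism with φ(x,y) = φ⁺(x, σ⁺ y). Then the isometry group G(φ) equals the centralizer of σ⁺ in the isometry group O(φ⁺) of φ⁺: an automorphism a ∈ GL(V) preserves φ if and only if a preserves φ⁺ and commutes with σ⁺. -/
variable {F V : Type*} [Field F] [AddCommGroup V] [Module F V]

theorem isometry_group_eq_centralizer_in_orthogonal_group
    [FiniteDimensional F V] (φ : V →ₗ[F] V →ₗ[F] F)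
    (hndl : ∀ v : V, (∀ w : V, φ v w = 0) → v = 0)
    (hndr : ∀ v : V, (∀ w : V, φ w v = 0) → v = 0)
    (hndplus : ∀ v : V, (∀ w : V, (φ + φ.flip) v w = 0) → v = 0)
    (σp : V →ₗ[F] V)
    (hσp : ∀ x y : V, φ x y = (φ + φ.flip) x (σp y)) :
    ∀ a : V ≃ₗ[F] V,
      (∀ x y : V, φ (a x) (a y) = φ x y) ↔
        ((∀ x y : V, (φ + φ.flip) (a x) (a y) = (φ + φ.flip) x y) ∧
          ∀ v : V, a (σp v) = σp (a v)) := by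
  intro a
  have hsymm : ∀ x y : V, (φ + φ.flip) x y = (φ + φ.flip) y x := by
    intro x y; simp [add_comm]
  constructor
  · intro h
    have hplus : ∀ x y : V, (φ + φ.flip) (a x) (a y) = (φ + φ.flip) x y := by
      intro x y; simp [h]
    refine ⟨hplus, fun v => ?_⟩
    have key : ∀ x : V, (φ + φ.flip) x (a (σp v)) = (φ + φ.flip) x (σp (a v)) := by
      intro x
      have hx : x = a (a.symm x) := (a.apply_symm_apply x).symm
      calc (φ + φ.flip) x (a (σp v))
          = (φ + φ.flip) (a (a.symm x)) (a (σp v)) := by rw [← hx]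
        _ = (φ + φ.flip) (a.symm x) (σp v) := hplus _ _
        _ = φ (a.symm x) v := (hσp _ _).symm
        _ = φ (a (a.symm x)) (a v) := (h _ _).symm
        _ = φ x (a v) := by rw [← hx]
        _ = (φ + φ.flip) x (σp (a v)) := hσp _ _
    have : ∀ x : V, (φ + φ.flip) (a (σp v) - σp (a v)) x = 0 := by
      intro x
      rw [hsymm, map_sub, key x, sub_self]
    have := hndplus _ this
    exact sub_eq_zero.mp this
  · rintro ⟨hplus, hcomm⟩ x y
    calc φ (a x) (a y) = (φ + φ.flip) (a x) (σp (a y)) := hσp _ _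
      _ = (φ + φ.flip) (a x) (a (σp y)) := by rw [hcomm]
      _ = (φ + φ.flip) x (σp y) := hplus _ _
      _ = φ x y := (hσp _ _).symm
end

section
/- Let (V,φ) be a non-degenerate bilinear space over a field F of characteristic ≠ 2 such that φ⁻ = φ − φ' is non-degenerate, and let σ^{-+} be the unique endomorphism with φ⁺(x,y) = φ⁻(x, σ^{-+} y). Then G(φ) = C_{Sp(φ⁻)}(σ^{-+}): an automorphism a ∈ GL(V) preserves φ if and only if a preserves the alternating form φ⁻ and commutes with σ^{-+}. -/
variable {F V : Type*} [Field F] [AddCommGroup V] [Module F V]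

theorem isometry_group_eq_centralizer_in_symplectic_group
    [FiniteDimensional F V] (φ : V →ₗ[F] V →ₗ[F] F)
    (hchar : (2 : F) ≠ 0)
    (hndl : ∀ v : V, (∀ w : V, φ v w = 0) → v = 0)
    (hndr : ∀ v : V, (∀ w : V, φ w v = 0) → v = 0)
    (hndminus : ∀ v : V, (∀ w : V, (φ - φ.flip) v w = 0) → v = 0)
    (σm : V →ₗ[F] V)
    (hσm : ∀ x y : V, (φ + φ.flip) x y = (φ - φ.flip) x (σm y)) :
    ∀ a : V ≃ₗ[F] V,
      (∀ x y : V, φ (a x) (a y) = φ x y) ↔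
        ((∀ x y : V, (φ - φ.flip) (a x) (a y) = (φ - φ.flip) x y) ∧
          ∀ v : V, a (σm v) = σm (a v)) := by
  intro a
  have skew : ∀ x y : V, (φ - φ.flip) x y = -((φ - φ.flip) y x) := by
    intro x y; simp [LinearMap.sub_apply, LinearMap.flip_apply]
  constructor
  · intro h
    have hflip : ∀ x y : V, φ.flip (a x) (a y) = φ.flip x y := by
      intro x y; simp [LinearMap.flip_apply, h]
    have hm : ∀ x y : V, (φ - φ.flip) (a x) (a y) = (φ - φ.flip) x y := by
      intro x y; simp [LinearMap.sub_apply, h, hflip]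
    have hp : ∀ x y : V, (φ + φ.flip) (a x) (a y) = (φ + φ.flip) x y := by
      intro x y; simp [LinearMap.add_apply, h, hflip]
    refine ⟨hm, fun v => ?_⟩
    have key : ∀ x : V, (φ - φ.flip) x (a (σm v) - σm (a v)) = 0 := by
      intro x
      have h1 : (φ - φ.flip) x (a (σm v)) = (φ + φ.flip) (a.symm x) v := by
        have := hm (a.symm x) (σm v)
        rw [a.apply_symm_apply] at this
        rw [this, ← hσm]
      have h2 : (φ - φ.flip) x (σm (a v)) = (φ + φ.flip) (a.symm x) v := by
        rw [← hσm]
        have := hp (a.symm x) v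
        rw [a.apply_symm_apply] at this
        rw [this]
      rw [map_sub, h1, h2, sub_self]
    have : a (σm v) - σm (a v) = 0 := by
      apply hndminus
      intro w
      rw [skew, key w, neg_zero]
    exact sub_eq_zero.mp this
  · rintro ⟨hm, hc⟩
    intro x y
    have hp : (φ + φ.flip) (a x) (a y) = (φ + φ.flip) x y := by
      rw [hσm, hσm, ← hc, hm]
    have h2 : (2 : F) * φ (a x) (a y) = (2 : F) * φ x y := by
      have e1 := hm x y
      have e2 := hp
      simp only [LinearMap.sub_apply, LinearMap.add_apply, LinearMap.flip_apply] at e1 e2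
      ring_nf
      linear_combination e1 + e2
    exact mul_left_cancel₀ hchar h2
end

section
/- Let m ≥ 2 and let F be any field. Consider the action of GL_m(F) on the space A_m(F) of alternating m×m matrices by congruence: X·A = XAX'. Then A_m(F) is an irreducible GL_m(F)-module, i.e. the only GL_m(F)-invariant subspaces of A_m(F) are 0 and A_m(F). -/
open Matrix

/-- The space of alternating `m × m` matrices over `F`. -/
def altMat (F : Type*) [Field F] (m : ℕ) : Submodule F (Matrix (Fin m) (Fin m) F) where
  carrier := {A | Aᵀ = -A ∧ ∀ i, A i i = 0}
  add_mem' := by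
    rintro A B ⟨hA, hA'⟩ ⟨hB, hB'⟩
    refine ⟨?_, fun i => ?_⟩
    · rw [Matrix.transpose_add, hA, hB, neg_add]
    · simp [Matrix.add_apply, hA' i, hB' i]
  zero_mem' := by simp
  smul_mem' := by
    rintro c A ⟨hA, hA'⟩
    refine ⟨?_, fun i => ?_⟩
    · rw [Matrix.transpose_smul, hA, smul_neg]
    · simp [Matrix.smul_apply, hA' i]

/-- The space of symmetric `m × m` matrices over `F`. -/
def symMat (F : Type*) [Field F] (m : ℕ) : Submodule F (Matrix (Fin m) (Fin m) F) where
  carrier := {A | Aᵀ = A}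
  add_mem' := by
    intro A B hA hB
    show (A + B)ᵀ = A + B
    rw [Matrix.transpose_add, hA, hB]
  zero_mem' := by simp
  smul_mem' := by
    intro c A hA
    show (c • A)ᵀ = c • A
    rw [Matrix.transpose_smul, hA]

section AuxIrred
variable {F : Type*} [Field F] {m : ℕ}

/-- `bmat a b = E_{ab} - E_{ba}`, the standard alternating matrices. -/
noncomputable def bmat (a b : Fin m) : Matrix (Fin m) (Fin m) F :=
  Matrix.single a b 1 - Matrix.single b a 1

/-- The basic congruence move associated with a transvection. -/
noncomputable def gmap (k l : Fin m) (A : Matrix (Fin m) (Fin m) F) :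
    Matrix (Fin m) (Fin m) F :=
  Matrix.single k l 1 * A - (Matrix.single k l 1 * A)ᵀ

lemma stdBM_transpose (k l : Fin m) :
    (Matrix.single k l (1:F))ᵀ = Matrix.single l k 1 := by
  ext i j
  simp [Matrix.single, transpose_apply, and_comm]

lemma mulE_apply (k l : Fin m) (A : Matrix (Fin m) (Fin m) F) (i j : Fin m) :
    (Matrix.single k l (1:F) * A) i j = if i = k then A l j else 0 := by
  rcases eq_or_ne i k with h | h
  · subst h; simp
  · simp [h]

lemma mulE_right (k l : Fin m) (A : Matrix (Fin m) (Fin m) F) (i j : Fin m) :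
    (A * Matrix.single k l (1:F)) i j = if j = l then A i k else 0 := by
  rcases eq_or_ne j l with h | h
  · subst h; simp
  · simp [h]

lemma EBE (i j k l : Fin m) (B : Matrix (Fin m) (Fin m) F) :
    Matrix.single i j (1:F) * B * Matrix.single k l 1 = B j k • Matrix.single i l 1 := by
  ext a b
  rw [mulE_right, Matrix.smul_apply]
  rcases eq_or_ne b l with rfl | hb
  · rw [if_pos rfl, mulE_apply]
    rcases eq_or_ne a i with rfl | ha
    · simp
    · simp [ha, Ne.symm ha]
  · simp [hb, Ne.symm hb, if_neg]

lemma bmat_swap (a b : Fin m) : -(bmat (F := F) a b) = bmat b a := by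
  rw [bmat, bmat, neg_sub]

lemma bmat_apply (a b i j : Fin m) :
    bmat (F := F) a b i j
      = (if a = i ∧ b = j then (1:F) else 0) - (if b = i ∧ a = j then 1 else 0) := by
  simp [bmat, Matrix.single]

lemma gmap_I1 {a b : Fin m} (hab : a ≠ b) (k : Fin m) :
    gmap k a (bmat a b) = bmat (F := F) k b := by
  have h : Matrix.single k a (1:F) * bmat a b = Matrix.single k b 1 := by
    rw [bmat, mul_sub, single_mul_single_same, single_mul_single_of_ne (c := 1) k a _ hab, sub_zero,
      mul_one]
  rw [gmap, h, stdBM_transpose, bmat]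

lemma gmap_I2 {a b : Fin m} (hab : a ≠ b) (k : Fin m) :
    gmap k b (bmat a b) = -(bmat (F := F) k a) := by
  have h : Matrix.single k b (1:F) * bmat a b = -(Matrix.single k a 1) := by
    rw [bmat, mul_sub, single_mul_single_same, single_mul_single_of_ne (c := 1) k b _ hab.symm,
      zero_sub, mul_one]
  rw [gmap, h, transpose_neg, stdBM_transpose, bmat]
  abel

lemma gmap_I3 {p q r : Fin m} (hqr : q ≠ r) (A : Matrix (Fin m) (Fin m) F) :
    gmap p q (gmap r p A) = (-(A p q)) • bmat p r := by
  have h : Matrix.single p q (1:F) * gmap r p A = (-(A p q)) • Matrix.single p r 1 := by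
    rw [gmap, mul_sub, transpose_mul, stdBM_transpose, ← mul_assoc,
      single_mul_single_of_ne (c := 1) p q _ hqr, zero_mul, ← mul_assoc, EBE, transpose_apply,
      zero_sub, neg_smul]
  rw [gmap, h, transpose_smul, stdBM_transpose, bmat, smul_sub]

lemma trans_unit (k l : Fin m) (hkl : k ≠ l) :
    (1 + Matrix.single k l (1:F)) * (1 - Matrix.single k l (1:F)) = 1 ∧
    (1 - Matrix.single k l (1:F)) * (1 + Matrix.single k l (1:F)) = 1 := by
  have h1 : (1 : Matrix (Fin m) (Fin m) F) + Matrix.single k l 1 = transvection k l 1 := rfl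
  have h2 : (1 : Matrix (Fin m) (Fin m) F) - Matrix.single k l 1 = transvection k l (-1) := by
    rw [Matrix.transvection, sub_eq_add_neg]
    congr 1
    ext i j
    simp [Matrix.single]
    split <;> simp
  rw [h1, h2]
  constructor
  · rw [transvection_mul_transvection_same _ _ hkl, add_neg_cancel, transvection_zero]
  · rw [transvection_mul_transvection_same _ _ hkl, neg_add_cancel, transvection_zero]

open MatrixGroups in
lemma step_mem
    (M : Submodule F (Matrix (Fin m) (Fin m) F))
    (hMA : M ≤ altMat F m)
    (hinv : ∀ X : GL (Fin m) F, ∀ A ∈ M,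
      (X : Matrix (Fin m) (Fin m) F) * A * (X : Matrix (Fin m) (Fin m) F)ᵀ ∈ M)
    {k l : Fin m} (hkl : k ≠ l) {A : Matrix (Fin m) (Fin m) F} (hA : A ∈ M) :
    gmap k l A ∈ M := by
  set E := Matrix.single k l (1:F) with hE
  obtain ⟨hXl, hXr⟩ := trans_unit (F := F) k l hkl
  have hmem := hinv (⟨1 + E, 1 - E, hXl, hXr⟩ : GL (Fin m) F) A hA
  have hcoe : ((⟨1 + E, 1 - E, hXl, hXr⟩ : GL (Fin m) F) : Matrix (Fin m) (Fin m) F)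
      = 1 + E := rfl
  rw [hcoe] at hmem
  have hskew : Aᵀ = -A := (hMA hA).1
  have hdiag : A l l = 0 := (hMA hA).2 l
  have hEAE : E * A * Eᵀ = 0 := by
    ext i j
    rw [hE, stdBM_transpose]
    simp only [Matrix.mul_apply, mulE_apply, Matrix.single, Matrix.of_apply, ite_and,
      ite_mul, zero_mul, one_mul, Finset.sum_ite_eq, Finset.sum_ite_eq', Finset.mem_univ,
      if_true, Matrix.zero_apply]
    split_ifs <;> simp_all
  have hAET : A * Eᵀ = -((E * A)ᵀ) := by
    rw [transpose_mul, hskew, neg_mul, neg_neg]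
  have hexp : (1 + E) * A * (1 + E)ᵀ = A + gmap k l A := by
    have hT : ((1 : Matrix (Fin m) (Fin m) F) + E)ᵀ = 1 + Eᵀ := by
      rw [transpose_add, transpose_one]
    rw [hT, gmap, ← hE]
    have expand : (1 + E) * A * (1 + Eᵀ) = A + A * Eᵀ + E * A + E * A * Eᵀ := by
      noncomm_ring
    rw [expand, hEAE, hAET]
    abel
  rw [hexp] at hmem
  have := M.sub_mem hmem hA
  simpa using this

lemma span_alt {A : Matrix (Fin m) (Fin m) F} (hsk : Aᵀ = -A) (hd : ∀ i, A i i = 0) :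
    A = ∑ c : Fin m, ∑ d : Fin m, if c < d then A c d • bmat (F := F) c d else 0 := by
  have hba : ∀ i j : Fin m, A j i = -A i j := by
    intro i j
    have h := congrFun (congrFun hsk j) i
    simp only [transpose_apply, Matrix.neg_apply] at h
    rw [h, neg_neg]
  ext i j
  have hterm : ∀ c d : Fin m,
      (if c < d then A c d • bmat (F := F) c d else 0) i j
      = (if c = i ∧ d = j ∧ c < d then A c d else 0)
        - (if d = i ∧ c = j ∧ c < d then A c d else 0) := by
    intro c d
    by_cases h : c < d
    · rw [if_pos h, Matrix.smul_apply, bmat_apply]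
      simp [h, smul_sub, mul_sub]
    · rw [if_neg h]
      simp [h]
  have hsum : (∑ c : Fin m, ∑ d : Fin m,
        if c < d then A c d • bmat (F := F) c d else 0) i j
      = (if i < j then A i j else 0) - (if j < i then A j i else 0) := by
    simp only [Matrix.sum_apply, hterm, Finset.sum_sub_distrib]
    congr 1
    · rw [Finset.sum_eq_single i]
      · rw [Finset.sum_eq_single j]
        · simp
        · intro d _ hd'; rw [if_neg (fun hcon => hd' hcon.2.1)]
        · simp
      · intro c _ hc
        exact Finset.sum_eq_zero fun d _ => if_neg (fun hcon => hc hcon.1)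
      · simp
    · rw [Finset.sum_eq_single j]
      · rw [Finset.sum_eq_single i]
        · simp
        · intro d _ hd'; rw [if_neg (fun hcon => hd' hcon.1)]
        · simp
      · intro c _ hc
        exact Finset.sum_eq_zero fun d _ => if_neg (fun hcon => hc hcon.2.1)
      · simp
  rw [hsum]
  rcases lt_trichotomy i j with h | h | h
  · rw [if_pos h, if_neg (asymm h), sub_zero]
  · subst h; simp [hd]
  · rw [if_neg (asymm h), if_pos h, hba i j, zero_sub, neg_neg]

lemma two_case {A : Matrix (Fin 2) (Fin 2) F} (hsk : Aᵀ = -A) (hd : ∀ i, A i i = 0)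
    {p q : Fin 2} (hpq : p ≠ q) : A = A p q • bmat p q := by
  have h10 : A 1 0 = -A 0 1 := by
    have h := congrFun (congrFun hsk 0) 1
    simpa using h
  fin_cases p <;> fin_cases q
  · exact absurd rfl hpq
  · ext i j; fin_cases i <;> fin_cases j <;> simp [bmat_apply, hd 0, hd 1, h10]
  · ext i j; fin_cases i <;> fin_cases j <;> simp [bmat_apply, hd 0, hd 1, h10]
  · exact absurd rfl hpq

lemma smul_cancel_mem {V : Type*} [AddCommGroup V] [Module F V] {M : Submodule F V} {t : F}
    (ht : t ≠ 0) {x y : V} (hx : x ∈ M) (hxy : x = t • y) : y ∈ M := by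
  have h := M.smul_mem t⁻¹ hx
  rwa [hxy, smul_smul, inv_mul_cancel₀ ht, one_smul] at h

end AuxIrred

open MatrixGroups in
theorem alternating_matrices_irreducible_under_congruence
    {F : Type*} [Field F] (m : ℕ) (hm : 2 ≤ m)
    (M : Submodule F (Matrix (Fin m) (Fin m) F))
    (hMA : M ≤ altMat F m)
    (hinv : ∀ X : GL (Fin m) F, ∀ A ∈ M,
      (X : Matrix (Fin m) (Fin m) F) * A * (X : Matrix (Fin m) (Fin m) F)ᵀ ∈ M) :
    M = ⊥ ∨ M = altMat F m := by
  by_cases hbot : M = ⊥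
  · exact Or.inl hbot
  right
  obtain ⟨A, hA, hA0⟩ := (Submodule.ne_bot_iff M).mp hbot
  obtain ⟨p, q, hApq⟩ : ∃ p q : Fin m, A p q ≠ 0 := by
    by_contra h
    push_neg at h
    exact hA0 (by ext i j; simpa using h i j)
  have hpq : p ≠ q := by
    rintro rfl
    exact hApq ((hMA hA).2 p)
  have hBM : ∃ a b : Fin m, a ≠ b ∧ bmat (F := F) a b ∈ M := by
    by_cases h3 : 3 ≤ m
    · obtain ⟨r, hrp, hrq⟩ : ∃ r : Fin m, r ≠ p ∧ r ≠ q := by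
        by_contra h
        push_neg at h
        have hsubuniv : (Finset.univ : Finset (Fin m)) ⊆ {p, q} := by
          intro x _
          by_cases hxp : x = p
          · simp [hxp]
          · simp [h x hxp]
        have hcard := Finset.card_le_card hsubuniv
        rw [Finset.card_univ, Fintype.card_fin] at hcard
        have h2 : ({p, q} : Finset (Fin m)).card ≤ 2 :=
          (Finset.card_insert_le _ _).trans (by simp)
        omega
      refine ⟨p, r, Ne.symm hrp, ?_⟩
      have h1 := step_mem M hMA hinv hrp hA
      have h2 := step_mem M hMA hinv hpq h1
      exact smul_cancel_mem (neg_ne_zero.mpr hApq) h2 (gmap_I3 (Ne.symm hrq) A)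
    · have hm2 : m = 2 := by omega
      subst hm2
      exact ⟨p, q, hpq, smul_cancel_mem hApq hA (two_case (hMA hA).1 (hMA hA).2 hpq)⟩
  obtain ⟨a, b, hab, hB⟩ := hBM
  have hsub : ∀ e : Fin m, e ≠ a → bmat (F := F) a e ∈ M := by
    intro e hea
    by_cases heb : e = b
    · subst heb; exact hB
    · have h1 := step_mem M hMA hinv heb hB
      rw [gmap_I2 hab e] at h1
      rwa [bmat_swap] at h1
  have hall : ∀ c d : Fin m, c ≠ d → bmat (F := F) c d ∈ M := by
    intro c d hcd
    by_cases hca : c = a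
    · subst hca; exact hsub d (Ne.symm hcd)
    · by_cases hda : d = a
      · subst hda
        have h1 := M.neg_mem (hsub c hca)
        rwa [bmat_swap] at h1
      · have h1 := hsub d hda
        have h2 := step_mem M hMA hinv hca h1
        rwa [gmap_I1 (Ne.symm hda) c] at h2
  apply le_antisymm hMA
  intro B hBmem
  obtain ⟨hsk, hd⟩ := hBmem
  rw [span_alt hsk hd]
  exact Submodule.sum_mem _ fun c _ => Submodule.sum_mem _ fun d _ => by
    by_cases h : c < d
    · rw [if_pos h]; exact M.smul_mem _ (hall c d h.ne)
    · rw [if_neg h]; exact M.zero_mem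
end

section
/- Let m ≥ 2 and let F be a field of characteristic 2. Under the congruence action X·A = XAX' of GL_m(F), the quotient S_m(F)/A_m(F) of symmetric matrices modulo alternating matrices is an irreducible GL_m(F)-module. -/
open Matrix

section Aux
variable {F : Type*} [Field F] {m : ℕ}

lemma std_transpose (i j : Fin m) (c : F) :
    (Matrix.single i j c)ᵀ = Matrix.single j i c := by
  ext a b; simp [Matrix.single, and_comm]

lemma diag_mul_std (d : Fin m → F) (i j : Fin m) (c : F) :
    Matrix.diagonal d * Matrix.single i j c = Matrix.single i j (d i * c) := by
  ext a b
  rw [Matrix.diagonal_mul]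
  by_cases h : a = i ∧ b = j
  · obtain ⟨rfl, rfl⟩ := h; simp
  · have h' : ¬(i = a ∧ j = b) := fun ⟨h1, h2⟩ => h ⟨h1.symm, h2.symm⟩
    rw [Matrix.single_apply_of_ne _ _ _ _ _ h', Matrix.single_apply_of_ne _ _ _ _ _ h', mul_zero]

lemma std_mul_diag (d : Fin m → F) (i j : Fin m) (c : F) :
    Matrix.single i j c * Matrix.diagonal d = Matrix.single i j (c * d j) := by
  ext a b
  rw [Matrix.mul_diagonal]
  by_cases h : a = i ∧ b = j
  · obtain ⟨rfl, rfl⟩ := h; simp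
  · have h' : ¬(i = a ∧ j = b) := fun ⟨h1, h2⟩ => h ⟨h1.symm, h2.symm⟩
    rw [Matrix.single_apply_of_ne _ _ _ _ _ h', Matrix.single_apply_of_ne _ _ _ _ _ h', zero_mul]

lemma mat_neg_eq [CharP F 2] (M : Matrix (Fin m) (Fin m) F) : -M = M := by
  ext a b; exact CharTwo.neg_eq _

lemma single_diag_eq_std (j : Fin m) :
    Matrix.diagonal (Pi.single j (1 : F)) = Matrix.single j j (1 : F) := by
  ext a b
  by_cases h1 : a = b
  · subst h1
    by_cases h2 : a = j
    · subst h2; simp [Pi.single_apply]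
    · simp [Pi.single_apply, Ne.symm h2, Matrix.single,
        show ¬(j = a ∧ j = a) from fun ⟨h, _⟩ => h2 h.symm]
  · rw [Matrix.diagonal_apply_ne _ h1]
    have : ¬(j = a ∧ j = b) := fun ⟨ha, hb⟩ => h1 (ha.symm.trans hb)
    simp [Matrix.single, this]

lemma diag_eq_sum_std (d : Fin m → F) :
    Matrix.diagonal d = ∑ k : Fin m, d k • Matrix.single k k (1 : F) := by
  ext a b
  by_cases h1 : a = b
  · subst h1
    simp [Matrix.sum_apply, Matrix.smul_single, Matrix.single, ite_and, eq_comm]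
  · simp [Matrix.sum_apply, Matrix.diagonal_apply_ne _ h1, Matrix.smul_single, Matrix.single,
      ite_and, h1, eq_comm]

/-- The transvection `1 + E_{ji}` as an invertible matrix. -/
noncomputable def tUnit (i j : Fin m) (h : j ≠ i) : (Matrix (Fin m) (Fin m) F)ˣ :=
  { val := transvection j i (1 : F)
    inv := transvection j i (-1 : F)
    val_inv := by rw [transvection_mul_transvection_same _ _ h]; simp
    inv_val := by rw [transvection_mul_transvection_same _ _ h]; simp }

lemma key_step [CharP F 2] (N : Submodule F (Matrix (Fin m) (Fin m) F))
    (hAN : altMat F m ≤ N)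
    (hinv : ∀ X : GL (Fin m) F, ∀ A ∈ N,
      (X : Matrix (Fin m) (Fin m) F) * A * (X : Matrix (Fin m) (Fin m) F)ᵀ ∈ N)
    (d : Fin m → F) (hd : Matrix.diagonal d ∈ N) (i j : Fin m) (hij : j ≠ i) :
    Matrix.single j j (d i) ∈ N := by
  have hX := hinv (tUnit i j hij) (Matrix.diagonal d) hd
  have hXval : ((tUnit i j hij : (Matrix (Fin m) (Fin m) F)ˣ) : Matrix (Fin m) (Fin m) F)
      = transvection j i (1 : F) := rfl
  rw [hXval] at hX
  have hT : (transvection j i (1 : F))ᵀ = transvection i j (1 : F) := by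
    simp [transvection, transpose_add, std_transpose]
  rw [hT] at hX
  have hexp : transvection j i (1 : F) * Matrix.diagonal d * transvection i j (1 : F)
      = Matrix.diagonal d + (Matrix.single i j (d i) + Matrix.single j i (d i))
        + Matrix.single j j (d i) := by
    simp only [transvection, Matrix.add_mul, Matrix.mul_add, Matrix.one_mul, Matrix.mul_one,
      diag_mul_std, std_mul_diag, Matrix.single_mul_single_same, mul_one, one_mul]
    abel
  rw [hexp] at hX
  have halt : Matrix.single i j (d i) + Matrix.single j i (d i) ∈ altMat F m := by
    constructor
    · show _ = _
      rw [transpose_add, std_transpose, std_transpose, mat_neg_eq]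
      abel
    · intro k
      rw [Matrix.add_apply,
        Matrix.single_apply_of_ne _ _ _ _ _ (fun ⟨h1, h2⟩ => hij (h2.trans h1.symm)),
        Matrix.single_apply_of_ne _ _ _ _ _ (fun ⟨h1, h2⟩ => hij (h1.trans h2.symm)), add_zero]
  have h3 := N.sub_mem (N.sub_mem hX hd) (hAN halt)
  rw [show Matrix.diagonal d + (Matrix.single i j (d i) + Matrix.single j i (d i))
      + Matrix.single j j (d i) - Matrix.diagonal d
      - (Matrix.single i j (d i) + Matrix.single j i (d i))
      = Matrix.single j j (d i) from by abel] at h3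
  exact h3

end Aux

open MatrixGroups in
theorem sym_mod_alt_irreducible_under_congruence_char_two
    {F : Type*} [Field F] [CharP F 2] (m : ℕ) (hm : 2 ≤ m)
    (N : Submodule F (Matrix (Fin m) (Fin m) F))
    (hAN : altMat F m ≤ N) (hNS : N ≤ symMat F m)
    (hinv : ∀ X : GL (Fin m) F, ∀ A ∈ N,
      (X : Matrix (Fin m) (Fin m) F) * A * (X : Matrix (Fin m) (Fin m) F)ᵀ ∈ N) :
    N = altMat F m ∨ N = symMat F m := by
  by_cases hle : N ≤ altMat F m
  · exact Or.inl (le_antisymm hle hAN)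
  right
  obtain ⟨A, hA, hAnot⟩ := SetLike.not_le_iff_exists.mp hle
  have hAsym : Aᵀ = A := hNS hA
  have hAneg : Aᵀ = -A := by rw [hAsym, mat_neg_eq]
  have hdiag : ∃ i, A i i ≠ 0 := by
    by_contra h
    push_neg at h
    exact hAnot ⟨hAneg, h⟩
  obtain ⟨i0, hi0⟩ := hdiag
  have hB : A - Matrix.diagonal (fun k => A k k) ∈ altMat F m := by
    constructor
    · show _ = _
      rw [transpose_sub, hAsym, Matrix.diagonal_transpose, mat_neg_eq]
    · intro k; simp
  have hD : Matrix.diagonal (fun k => A k k) ∈ N := by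
    have := N.sub_mem hA (hAN hB)
    simpa using this
  have hstd : ∀ k : Fin m, Matrix.single k k (1 : F) ∈ N := by
    have hjj : ∀ j : Fin m, j ≠ i0 → Matrix.single j j (1 : F) ∈ N := by
      intro j hj
      have h1 := key_step N hAN hinv _ hD i0 j hj
      have h2 := N.smul_mem (A i0 i0)⁻¹ h1
      rwa [Matrix.smul_single, smul_eq_mul, inv_mul_cancel₀ hi0] at h2
    intro k
    by_cases hk : k = i0
    · subst hk
      haveI : Nontrivial (Fin m) := Fin.nontrivial_iff_two_le.mpr hm
      obtain ⟨j, hj⟩ := exists_ne k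
      have hdiagj : Matrix.diagonal (Pi.single j (1 : F)) ∈ N := by
        rw [single_diag_eq_std]; exact hjj j hj
      have := key_step N hAN hinv _ hdiagj j k (Ne.symm hj)
      simpa using this
    · exact hjj k hk
  refine le_antisymm hNS fun S hS => ?_
  have hSsym : Sᵀ = S := hS
  have hSalt : S - Matrix.diagonal (fun k => S k k) ∈ altMat F m := by
    constructor
    · show _ = _
      rw [transpose_sub, hSsym, Matrix.diagonal_transpose, mat_neg_eq]
    · intro k; simp
  have hdS : Matrix.diagonal (fun k => S k k) ∈ N := by
    rw [diag_eq_sum_std]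
    exact N.sum_mem fun k _ => N.smul_mem _ (hstd k)
  have := N.add_mem (hAN hSalt) hdS
  simpa using this
end

section
/- Let (V,φ) be a finite-dimensional bilinear space with isometry group G, and let V_∞ ⊆ ⁿ∞V be the canonical G-invariant subspaces (V_∞ = L_∞(V)+R_∞(V) and ⁿ∞V = L^∞(V)+R^∞(V), where ⁿ∞V = L(V_∞)). Let K = G[V_∞] ∩ G[ⁿ∞V/V_∞] be the subgroup of isometries fixing V_∞ pointwise and acting trivially on ⁿ∞V/V_∞. Then for any g, h, k ∈ K one has (k−1)(h−1)(g−1) = 0 as endomorphisms of V; in particular every element of K is unipotent and K is nilpotent of class at most 2. -/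
variable {F V : Type*} [Field F] [AddCommGroup V] [Module F V]

open scoped commutatorElement

section Aux

variable (φ : V →ₗ[F] V →ₗ[F] F)

/-- The defining property of membership in K. -/
def PK (g : V ≃ₗ[F] V) : Prop :=
  IsIsom φ g ∧ (∀ v ∈ Vinf φ, g v = v) ∧ ∀ v ∈ Lc φ (Vinf φ), g v - v ∈ Vinf φ

variable {φ}

lemma stepA {g : V ≃ₗ[F] V} (hg : PK φ g) (v : V) : g v - v ∈ Lc φ (Vinf φ) := by
  intro u hu
  have h1 : φ (g v) (g u) = φ v u := hg.1 v u
  rw [hg.2.1 u hu] at h1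
  simp [h1]

lemma fix_symm {g : V ≃ₗ[F] V} (hg : PK φ g) {v : V} (hv : v ∈ Vinf φ) :
    g.symm v = v := by
  apply g.injective
  rw [g.apply_symm_apply, hg.2.1 v hv]

lemma presLc_symm {g : V ≃ₗ[F] V} (hg : PK φ g) {v : V} (hv : v ∈ Lc φ (Vinf φ)) :
    g.symm v ∈ Lc φ (Vinf φ) := by
  intro u hu
  have h1 : φ (g (g.symm v)) (g u) = φ (g.symm v) u := hg.1 _ u
  rw [g.apply_symm_apply, hg.2.1 u hu] at h1
  rw [← h1]
  exact hv u hu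

lemma comm_sub (g h : V ≃ₗ[F] V) (w : V) :
    g (h w) - h (g w) = (g (h w - w) - (h w - w)) - (h (g w - w) - (g w - w)) := by
  simp only [map_sub]
  abel

lemma ghhg_mem {g h : V ≃ₗ[F] V} (hg : PK φ g) (hh : PK φ h) (w : V) :
    g (h w) - h (g w) ∈ Vinf φ := by
  rw [comm_sub]
  exact sub_mem (hg.2.2 _ (stepA hh w)) (hh.2.2 _ (stepA hg w))

lemma ghhg_Lc {g h : V ≃ₗ[F] V} (hg : PK φ g) (hh : PK φ h) {w : V}
    (hw : w ∈ Lc φ (Vinf φ)) : g (h w) = h (g w) := by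
  rw [← sub_eq_zero, comm_sub, hh.2.1 _ (hg.2.2 w hw), hg.2.1 _ (hh.2.2 w hw)]
  abel

lemma comm_apply (g h : V ≃ₗ[F] V) (v : V) :
    ⁅g, h⁆ v = g (h (g.symm (h.symm v))) := rfl

lemma c_fix_Lc {g h : V ≃ₗ[F] V} (hg : PK φ g) (hh : PK φ h) {v : V}
    (hv : v ∈ Lc φ (Vinf φ)) : ⁅g, h⁆ v = v := by
  rw [comm_apply]
  have hu : h.symm v ∈ Lc φ (Vinf φ) := presLc_symm hh hv
  have hw : g.symm (h.symm v) ∈ Lc φ (Vinf φ) := presLc_symm hg hu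
  rw [ghhg_Lc hg hh hw, g.apply_symm_apply, h.apply_symm_apply]

lemma c_sub_mem {g h : V ≃ₗ[F] V} (hg : PK φ g) (hh : PK φ h) (v : V) :
    ⁅g, h⁆ v - v ∈ Vinf φ := by
  rw [comm_apply]
  have key := ghhg_mem hg hh (g.symm (h.symm v))
  rwa [g.apply_symm_apply, h.apply_symm_apply] at key

lemma c_commute {g h k : V ≃ₗ[F] V} (hg : PK φ g) (hh : PK φ h) (hk : PK φ k) :
    Commute ⁅g, h⁆ k := by
  have : (⁅g, h⁆ * k : V ≃ₗ[F] V) = k * ⁅g, h⁆ := by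
    apply LinearEquiv.ext
    intro v
    show ⁅g, h⁆ (k v) = k (⁅g, h⁆ v)
    have e1 : ⁅g, h⁆ (k v) = ⁅g, h⁆ (k v - v) + ⁅g, h⁆ v := by
      rw [← map_add]; congr 1; abel
    have e2 : k (⁅g, h⁆ v) = k (⁅g, h⁆ v - v) + k v := by
      rw [← map_add]; congr 1; abel
    rw [e1, e2, c_fix_Lc hg hh (stepA hk v), hk.2.1 _ (c_sub_mem hg hh v)]
    abel
  exact this

end Aux

theorem stabilizer_K_is_two_step_nilpotent
    [FiniteDimensional F V] (φ : V →ₗ[F] V →ₗ[F] F) :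
    (∀ g h k : V ≃ₗ[F] V,
      (IsIsom φ g ∧ (∀ v ∈ Vinf φ, g v = v) ∧ ∀ v ∈ Lc φ (Vinf φ), g v - v ∈ Vinf φ) →
      (IsIsom φ h ∧ (∀ v ∈ Vinf φ, h v = v) ∧ ∀ v ∈ Lc φ (Vinf φ), h v - v ∈ Vinf φ) →
      (IsIsom φ k ∧ (∀ v ∈ Vinf φ, k v = v) ∧ ∀ v ∈ Lc φ (Vinf φ), k v - v ∈ Vinf φ) →
      (k.toLinearMap - LinearMap.id) ∘ₗ (h.toLinearMap - LinearMap.id) ∘ₗ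
        (g.toLinearMap - LinearMap.id) = 0) ∧
    (∀ g : V ≃ₗ[F] V,
      (IsIsom φ g ∧ (∀ v ∈ Vinf φ, g v = v) ∧ ∀ v ∈ Lc φ (Vinf φ), g v - v ∈ Vinf φ) →
      (g.toLinearMap - LinearMap.id) ^ 3 = 0) ∧
    (∀ g h k : V ≃ₗ[F] V,
      (IsIsom φ g ∧ (∀ v ∈ Vinf φ, g v = v) ∧ ∀ v ∈ Lc φ (Vinf φ), g v - v ∈ Vinf φ) →
      (IsIsom φ h ∧ (∀ v ∈ Vinf φ, h v = v) ∧ ∀ v ∈ Lc φ (Vinf φ), h v - v ∈ Vinf φ) →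
      (IsIsom φ k ∧ (∀ v ∈ Vinf φ, k v = v) ∧ ∀ v ∈ Lc φ (Vinf φ), k v - v ∈ Vinf φ) →
      ⁅⁅g, h⁆, k⁆ = 1) := by

  have triple : ∀ g h k : V ≃ₗ[F] V, PK φ g → PK φ h → PK φ k →
      (k.toLinearMap - LinearMap.id) ∘ₗ (h.toLinearMap - LinearMap.id) ∘ₗ
        (g.toLinearMap - LinearMap.id) = 0 := by
    intro g h k hg hh hk
    apply LinearMap.ext
    intro v
    simp only [LinearMap.comp_apply, LinearMap.sub_apply, LinearMap.id_apply,
      LinearEquiv.coe_coe, LinearMap.zero_apply]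
    rw [sub_eq_zero]
    exact hk.2.1 _ (hh.2.2 _ (stepA hg v))
  refine ⟨fun g h k hg hh hk => triple g h k hg hh hk, ?_, ?_⟩
  · intro g hg
    have := triple g g g hg hg hg
    rw [pow_succ, pow_two]
    calc (g.toLinearMap - LinearMap.id) * (g.toLinearMap - LinearMap.id) *
          (g.toLinearMap - LinearMap.id)
        = (g.toLinearMap - LinearMap.id) ∘ₗ (g.toLinearMap - LinearMap.id) ∘ₗ
          (g.toLinearMap - LinearMap.id) := by
          rw [Module.End.mul_eq_comp, Module.End.mul_eq_comp, LinearMap.comp_assoc]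
      _ = 0 := this
  · intro g h k hg hh hk
    rw [commutatorElement_eq_one_iff_commute]
    exact c_commute hg hh hk
end

section
/- Let (V,φ) be a finite-dimensional bilinear space with isometry group G and canonical G-invariant subspace V_∞. Then the set G[V_∞] ∩ G[V/V_∞] of isometries fixing V_∞ pointwise and acting trivially on V/V_∞ is an abelian normal subgroup of G, and for any two of its elements g, h one has (h−1)(g−1) = 0; consequently gh = g + h − 1 and every element of this subgroup is unipotent. -/
variable {F V : Type*} [Field F] [AddCommGroup V] [Module F V]

@[simp] lemma equiv_apply_inv_apply (k : V ≃ₗ[F] V) (v : V) : k (k⁻¹ v) = v :=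
  k.apply_symm_apply v

@[simp] lemma equiv_inv_apply_apply (k : V ≃ₗ[F] V) (v : V) : k⁻¹ (k v) = v :=
  k.symm_apply_apply v

lemma isIsom_inv (φ : V →ₗ[F] V →ₗ[F] F) {k : V ≃ₗ[F] V} (hk : IsIsom φ k) :
    IsIsom φ k⁻¹ := by
  intro v w
  have := hk (k⁻¹ v) (k⁻¹ w)
  simpa using this.symm

lemma lodd_rodd_inv (φ : V →ₗ[F] V →ₗ[F] F) (n : ℕ) :
    ∀ (k : V ≃ₗ[F] V), IsIsom φ k → ∀ v : V,
      (v ∈ Lodd φ n → k v ∈ Lodd φ n) ∧ (v ∈ Rodd φ n → k v ∈ Rodd φ n) := by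
  induction n with
  | zero =>
    intro k hk v
    constructor
    · intro hv u _
      have h1 : φ (k v) (k (k⁻¹ u)) = φ v (k⁻¹ u) := hk v (k⁻¹ u)
      have h2 : φ v (k⁻¹ u) = 0 := hv (k⁻¹ u) trivial
      rw [equiv_apply_inv_apply] at h1
      rw [h1, h2]
    · intro hv u _
      have h1 : φ (k (k⁻¹ u)) (k v) = φ (k⁻¹ u) v := hk (k⁻¹ u) v
      have h2 : φ (k⁻¹ u) v = 0 := hv (k⁻¹ u) trivial
      rw [equiv_apply_inv_apply] at h1
      rw [h1, h2]
  | succ n ih =>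
    intro k hk v
    have hki : IsIsom φ k⁻¹ := isIsom_inv φ hk
    constructor
    · intro hv u hu
      have h1 : φ (k v) (k (k⁻¹ u)) = φ v (k⁻¹ u) := hk v (k⁻¹ u)
      rw [equiv_apply_inv_apply] at h1
      have h2 : k⁻¹ u ∈ Rc φ (Lodd φ n) := by
        intro w hw
        have h3 : φ (k w) u = 0 := hu (k w) ((ih k hk w).1 hw)
        have h4 : φ (k⁻¹ (k w)) (k⁻¹ u) = φ (k w) u := hki (k w) u
        rw [equiv_inv_apply_apply] at h4
        rw [h4, h3]
      rw [h1]
      exact hv (k⁻¹ u) h2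
    · intro hv u hu
      have h1 : φ (k (k⁻¹ u)) (k v) = φ (k⁻¹ u) v := hk (k⁻¹ u) v
      rw [equiv_apply_inv_apply] at h1
      have h2 : k⁻¹ u ∈ Lc φ (Rodd φ n) := by
        intro w hw
        have h3 : φ u (k w) = 0 := hu (k w) ((ih k hk w).2 hw)
        have h4 : φ (k⁻¹ u) (k⁻¹ (k w)) = φ u (k w) := hki u (k w)
        rw [equiv_inv_apply_apply] at h4
        rw [h4, h3]
      rw [h1]
      exact hv (k⁻¹ u) h2

lemma lsup_inv (φ : V →ₗ[F] V →ₗ[F] F) {k : V ≃ₗ[F] V} (hk : IsIsom φ k)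
    {v : V} (hv : v ∈ ⨆ n, Lodd φ n) : k v ∈ ⨆ n, Lodd φ n := by
  induction hv using Submodule.iSup_induction' with
  | mem n x hx => exact Submodule.mem_iSup_of_mem n ((lodd_rodd_inv φ n k hk x).1 hx)
  | zero => simp
  | add x y _ _ hx hy => rw [map_add]; exact Submodule.add_mem _ hx hy

lemma rsup_inv (φ : V →ₗ[F] V →ₗ[F] F) {k : V ≃ₗ[F] V} (hk : IsIsom φ k)
    {v : V} (hv : v ∈ ⨆ n, Rodd φ n) : k v ∈ ⨆ n, Rodd φ n := by
  induction hv using Submodule.iSup_induction' with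
  | mem n x hx => exact Submodule.mem_iSup_of_mem n ((lodd_rodd_inv φ n k hk x).2 hx)
  | zero => simp
  | add x y _ _ hx hy => rw [map_add]; exact Submodule.add_mem _ hx hy

lemma vinf_inv (φ : V →ₗ[F] V →ₗ[F] F) {k : V ≃ₗ[F] V} (hk : IsIsom φ k)
    {v : V} (hv : v ∈ Vinf φ) : k v ∈ Vinf φ := by
  obtain ⟨y, hy, z, hz, rfl⟩ := Submodule.mem_sup.mp hv
  rw [map_add]
  exact Submodule.add_mem _ (Submodule.mem_sup_left (lsup_inv φ hk hy))
    (Submodule.mem_sup_right (rsup_inv φ hk hz))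

theorem stabilizer_of_Vinf_and_quotient_is_abelian_unipotent
    [FiniteDimensional F V] (φ : V →ₗ[F] V →ₗ[F] F) :
    (∀ g h : V ≃ₗ[F] V,
      (IsIsom φ g ∧ (∀ v ∈ Vinf φ, g v = v) ∧ ∀ v : V, g v - v ∈ Vinf φ) →
      (IsIsom φ h ∧ (∀ v ∈ Vinf φ, h v = v) ∧ ∀ v : V, h v - v ∈ Vinf φ) →
      (h.toLinearMap - LinearMap.id) ∘ₗ (g.toLinearMap - LinearMap.id) = 0 ∧
      (g * h).toLinearMap = g.toLinearMap + h.toLinearMap - LinearMap.id ∧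
      g * h = h * g) ∧
    (∀ g k : V ≃ₗ[F] V,
      (IsIsom φ g ∧ (∀ v ∈ Vinf φ, g v = v) ∧ ∀ v : V, g v - v ∈ Vinf φ) →
      IsIsom φ k →
      (IsIsom φ (k * g * k⁻¹) ∧ (∀ v ∈ Vinf φ, (k * g * k⁻¹) v = v) ∧
        ∀ v : V, (k * g * k⁻¹) v - v ∈ Vinf φ)) ∧
    (∀ g : V ≃ₗ[F] V,
      (IsIsom φ g ∧ (∀ v ∈ Vinf φ, g v = v) ∧ ∀ v : V, g v - v ∈ Vinf φ) →
      (g.toLinearMap - LinearMap.id) ^ 2 = 0) := by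
  have key : ∀ (a b : V ≃ₗ[F] V), (∀ v ∈ Vinf φ, a v = v) → (∀ v : V, b v - v ∈ Vinf φ) →
      ∀ v : V, a (b v) = a v + b v - v := by
    intro a b hafix hbq v
    have h1 : a (b v - v) = b v - v := hafix _ (hbq v)
    rw [map_sub] at h1
    have h3 : a (b v) = (b v - v) + a v := sub_eq_iff_eq_add.mp h1
    rw [h3]; abel
  refine ⟨?_, ?_, ?_⟩
  · rintro g h ⟨-, hgfix, hgq⟩ ⟨-, hhfix, hhq⟩
    refine ⟨?_, ?_, ?_⟩
    · ext v
      have h2 : h (g v) - h v = g v - v := by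
        have := key h g hhfix hgq v
        rw [this]; abel
      have h3 : h (g v) = g v - v + h v := by rw [← h2]; abel
      simp only [LinearMap.comp_apply, LinearMap.sub_apply, LinearMap.id_apply,
        LinearEquiv.coe_coe, map_sub, LinearMap.zero_apply]
      rw [h3]; abel
    · ext v
      simp only [LinearEquiv.coe_toLinearMap_mul, Module.End.mul_apply,
        LinearMap.sub_apply, LinearMap.add_apply, LinearMap.id_apply, LinearEquiv.coe_coe]
      exact key g h hgfix hhq v
    · apply LinearEquiv.ext
      intro v
      show g (h v) = h (g v)
      rw [key g h hgfix hhq v, key h g hhfix hgq v]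
      abel
  · rintro g k ⟨hgi, hgfix, hgq⟩ hki
    have hkinv : IsIsom φ k⁻¹ := isIsom_inv φ hki
    have happ : ∀ v : V, (k * g * k⁻¹) v = k (g (k⁻¹ v)) := fun v => rfl
    refine ⟨?_, ?_, ?_⟩
    · intro v w
      rw [happ, happ, hki, hgi, hkinv]
    · intro v hv
      rw [happ, hgfix _ (vinf_inv φ hkinv hv), equiv_apply_inv_apply]
    · intro v
      have h2 := vinf_inv φ hki (hgq (k⁻¹ v))
      rw [map_sub, equiv_apply_inv_apply] at h2
      rw [happ]
      exact h2
  · rintro g ⟨-, hgfix, hgq⟩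
    rw [pow_two, Module.End.mul_eq_comp]
    ext v
    have h2 : g (g v) - g v = g v - v := by
      have := key g g hgfix hgq v
      rw [this]; abel
    have h3 : g (g v) = g v - v + g v := by rw [← h2]; abel
    simp only [LinearMap.comp_apply, LinearMap.sub_apply, LinearMap.id_apply,
      LinearEquiv.coe_coe, map_sub, LinearMap.zero_apply]
    rw [h3]; abel
end

section
/- Let (V,φ) be a bilinear space, G its isometry group, and V_∞ the canonical totally isotropic G-invariant subspace of the odd part V_odd. Then G acts transitively on the set of totally isotropic subspaces W of V_odd satisfying V_odd = V_∞ ⊕ W; more precisely, the pointwise stabilizer G[ⁿ∞V] of ⁿ∞V acts simply transitively (regularly) on this set. In particular, for any two totally isotropic complements W, W' of V_∞ in V_odd there is a unique isometry of V_odd fixing ⁿ∞V pointwise carrying W onto W'. -/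
variable {F V : Type*} [Field F] [AddCommGroup V] [Module F V]

section AuxProof

open Submodule

variable (φ : V →ₗ[F] V →ₗ[F] F)

theorem mem_Lc_iff' {U : Submodule F V} {x : V} : x ∈ Lc φ U ↔ ∀ u ∈ U, φ x u = 0 := Iff.rfl

theorem mem_Rc_iff' {U : Submodule F V} {x : V} : x ∈ Rc φ U ↔ ∀ u ∈ U, φ u x = 0 := Iff.rfl

theorem Lc_top_le_Vinf : Lc φ ⊤ ≤ Vinf φ :=
  le_trans (le_trans (le_of_eq rfl : Lc φ ⊤ ≤ Lodd φ 0) (le_iSup (Lodd φ) 0)) le_sup_left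

theorem Rc_top_le_Vinf : Rc φ ⊤ ≤ Vinf φ :=
  le_trans (le_trans (le_of_eq rfl : Rc φ ⊤ ≤ Rodd φ 0) (le_iSup (Rodd φ) 0)) le_sup_right

section Proj

variable (I W W' : Submodule F V) (h : IsCompl I W) (h' : IsCompl I W')

/-- The projection map `a + w ↦ a + π'(w)` where `a ∈ I`, `w ∈ W`, and `π'` is the
projection onto `W'` along `I`. -/
noncomputable def projMap : V →ₗ[F] V :=
  I.subtype ∘ₗ I.projectionOnto W h
    + W'.subtype ∘ₗ W'.projectionOnto I h'.symm ∘ₗ W.subtype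
        ∘ₗ W.projectionOnto I h.symm

theorem projMap_apply (x : V) :
    projMap I W W' h h' x
      = (I.projectionOnto W h x : V)
        + (W'.projectionOnto I h'.symm (W.projectionOnto I h.symm x) : V) := rfl

/-- Projection onto `W'` along `I`, as a map `V → V`, written as a difference. -/
theorem proj_eq_sub (x : V) :
    (W'.projectionOnto I h'.symm x : V) = x - (I.projectionOnto W' h' x : V) :=
  eq_sub_of_add_eq' (Submodule.projection_add_projection_eq_self h' x)

theorem projMap_comp :
    (projMap I W' W h' h).comp (projMap I W W' h h') = LinearMap.id := by
  ext x
  simp only [LinearMap.comp_apply, LinearMap.id_apply, projMap_apply]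
  set a := I.projectionOnto W h x with ha
  set w := W.projectionOnto I h.symm x with hw
  have key : ((W'.projectionOnto I h'.symm (w : V)) : V)
      = (w : V) - (I.projectionOnto W' h' (w : V) : V) := proj_eq_sub I W' h' (w : V)
  simp only [map_add, Submodule.projectionOnto_apply_left,
    Submodule.projectionOnto_apply_right, Submodule.coe_zero, zero_add, add_zero]
  rw [key, map_sub]
  simp only [Submodule.projectionOnto_apply_left,
    Submodule.projectionOnto_apply_right, sub_zero]
  have hx : (a : V) + (w : V) = x := Submodule.projection_add_projection_eq_self h x
  simpa using hx

theorem projMap_isom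
    (hI : ∀ x ∈ I, ∀ y ∈ I, φ x y = 0)
    (hW : ∀ x ∈ W, ∀ y ∈ W, φ x y = 0)
    (hW' : ∀ x ∈ W', ∀ y ∈ W', φ x y = 0)
    (x y : V) : φ (projMap I W W' h h' x) (projMap I W W' h h' y) = φ x y := by
  set a := I.projectionOnto W h x with ha
  set w := W.projectionOnto I h.symm x with hw
  set b := I.projectionOnto W h y with hb
  set u := W.projectionOnto I h.symm y with hu
  have hx : (a : V) + (w : V) = x := Submodule.projection_add_projection_eq_self h x
  have hy : (b : V) + (u : V) = y := Submodule.projection_add_projection_eq_self h y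
  rw [projMap_apply, projMap_apply, ← ha, ← hw, ← hb, ← hu,
    proj_eq_sub I W' h' (w : V), proj_eq_sub I W' h' (u : V), ← hx, ← hy]
  simp only [map_add, map_sub, LinearMap.add_apply, LinearMap.sub_apply]
  have h1 : φ (a : V) (I.projectionOnto W' h' (u : V) : V) = 0 :=
    hI _ a.2 _ (I.projectionOnto W' h' (u : V)).2
  have h2 : φ (I.projectionOnto W' h' (w : V) : V) (b : V) = 0 :=
    hI _ (I.projectionOnto W' h' (w : V)).2 _ b.2
  have h3 : φ ((w : V) - (I.projectionOnto W' h' (w : V) : V))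
      ((u : V) - (I.projectionOnto W' h' (u : V) : V)) = 0 := by
    have mw : (w : V) - (I.projectionOnto W' h' (w : V) : V) ∈ W' := by
      rw [← proj_eq_sub I W' h' (w : V)]
      exact (W'.projectionOnto I h'.symm (w : V)).2
    have mu : (u : V) - (I.projectionOnto W' h' (u : V) : V) ∈ W' := by
      rw [← proj_eq_sub I W' h' (u : V)]
      exact (W'.projectionOnto I h'.symm (u : V)).2
    exact hW' _ mw _ mu
  have h4 : φ (w : V) (u : V) = 0 := hW _ w.2 _ u.2
  simp only [map_sub, LinearMap.sub_apply] at h3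
  rw [h4] at *
  linear_combination h3 - h1 - h2

end Proj

end AuxProof

theorem regular_action_on_totally_isotropic_complements
    [FiniteDimensional F V] (φ : V →ₗ[F] V →ₗ[F] F)
    (hVinf_iso : ∀ x ∈ Vinf φ, ∀ y ∈ Vinf φ, φ x y = 0) :
    ∀ W W' : Submodule F V,
      (∀ x ∈ W, ∀ y ∈ W, φ x y = 0) →
      (∀ x ∈ W', ∀ y ∈ W', φ x y = 0) →
      IsCompl (Vinf φ) W → IsCompl (Vinf φ) W' →
      (∃ g : V ≃ₗ[F] V, IsIsom φ g ∧ W.map g.toLinearMap = W') ∧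
      (∃! g : V ≃ₗ[F] V, IsIsom φ g ∧ (∀ v ∈ Lc φ (Vinf φ), g v = v) ∧
        W.map g.toLinearMap = W') := by
  intro W W' hW hW' hc hc'
  set I := Vinf φ with hIdef
  -- the projection equivalence
  set g : V ≃ₗ[F] V :=
    LinearEquiv.ofLinear (projMap I W W' hc hc') (projMap I W' W hc' hc)
      (projMap_comp I W' W hc' hc) (projMap_comp I W W' hc hc') with hgdef
  have hg_apply : ∀ x : V, g x = projMap I W W' hc hc' x := fun _ => rfl
  have hg_symm_apply : ∀ x : V, g.symm x = projMap I W' W hc' hc x := fun _ => rfl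
  have hg_isom : IsIsom φ g := by
    intro x y
    rw [hg_apply, hg_apply]
    exact projMap_isom φ I W W' hc hc' hVinf_iso hW hW' x y
  -- g fixes I pointwise
  have hg_fixI : ∀ v ∈ I, g v = v := by
    intro v hv
    rw [hg_apply, projMap_apply]
    rw [Submodule.projectionOnto_apply_left hc ⟨v, hv⟩,
      Submodule.projectionOnto_apply_of_mem_right hc.symm hv]
    simp
  -- g maps W into W' pointwise
  have hg_W : ∀ w ∈ W, g w = ((W'.projectionOnto I hc'.symm w : V)) := by
    intro w hw
    rw [hg_apply, projMap_apply]
    rw [Submodule.projectionOnto_apply_of_mem_right hc hw,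
      Submodule.projectionOnto_apply_left hc.symm ⟨w, hw⟩]
    simp
  have hg_symm_W' : ∀ w ∈ W', g.symm w = ((W.projectionOnto I hc.symm w : V)) := by
    intro w hw
    rw [hg_symm_apply, projMap_apply]
    rw [Submodule.projectionOnto_apply_of_mem_right hc' hw,
      Submodule.projectionOnto_apply_left hc'.symm ⟨w, hw⟩]
    simp
  have hg_map : W.map g.toLinearMap = W' := by
    apply le_antisymm
    · rintro x ⟨w, hw, rfl⟩
      rw [LinearEquiv.coe_coe, hg_W w hw]
      exact (W'.projectionOnto I hc'.symm w).2
    · intro w' hw'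
      refine ⟨g.symm w', ?_, g.apply_symm_apply w'⟩
      rw [hg_symm_W' w' hw']
      exact (W.projectionOnto I hc.symm w').2
  -- Lc φ I = I
  have hI_le_Lc : I ≤ Lc φ I := fun v hv => fun u hu => hVinf_iso v hv u hu
  have hLc_le_I : Lc φ I ≤ I := by
    intro x hx
    have hdec : (I.projectionOnto W hc x : V) + (W.projectionOnto I hc.symm x : V)
        = x := Submodule.projection_add_projection_eq_self hc x
    set a := I.projectionOnto W hc x with ha
    set w := W.projectionOnto I hc.symm x with hwdef
    have hwL : (w : V) ∈ Lc φ ⊤ := by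
      intro y _
      have hydec : (I.projectionOnto W hc y : V)
          + (W.projectionOnto I hc.symm y : V) = y :=
        Submodule.projection_add_projection_eq_self hc y
      have hw_eq : (w : V) = x - (a : V) := by rw [← hdec]; abel
      have t1 : φ (w : V) (I.projectionOnto W hc y : V) = 0 := by
        rw [hw_eq, map_sub, LinearMap.sub_apply]
        rw [hx _ (I.projectionOnto W hc y).2,
          hVinf_iso _ a.2 _ (I.projectionOnto W hc y).2]
        simp
      have t2 : φ (w : V) (W.projectionOnto I hc.symm y : V) = 0 :=
        hW _ w.2 _ (W.projectionOnto I hc.symm y).2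
      rw [← hydec, map_add, t1, t2, add_zero]
    have hwI : (w : V) ∈ I := Lc_top_le_Vinf φ hwL
    have hw0 : (w : V) = 0 :=
      (Submodule.disjoint_def.mp hc.disjoint) (w : V) hwI w.2
    rw [← hdec, hw0, add_zero]
    exact a.2
  have hg_fixLc : ∀ v ∈ Lc φ I, g v = v := fun v hv => hg_fixI v (hLc_le_I hv)
  refine ⟨⟨g, hg_isom, hg_map⟩, g, ⟨hg_isom, hg_fixLc, hg_map⟩, ?_⟩
  -- uniqueness
  intro g' hg'
  obtain ⟨hg'_isom, hg'_fix, hg'_map⟩ := hg'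
  have hg'_fixI : ∀ v ∈ I, g' v = v := fun v hv => hg'_fix v (hI_le_Lc hv)
  apply LinearEquiv.toLinearMap_injective
  apply LinearMap.ext
  intro x
  have hdec : (I.projectionOnto W hc x : V) + (W.projectionOnto I hc.symm x : V)
      = x := Submodule.projection_add_projection_eq_self hc x
  set a := I.projectionOnto W hc x with ha
  set w := W.projectionOnto I hc.symm x with hwdef
  -- it suffices to show g' and g agree on a and w
  have haI : (a : V) ∈ I := a.2
  have hwW : (w : V) ∈ W := w.2
  have goal_w : g' (w : V) = g (w : V) := by
    set pw := ((W'.projectionOnto I hc'.symm (w : V)) : V) with hpw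
    have hgw : g (w : V) = pw := hg_W _ hwW
    have hg'wW' : g' (w : V) ∈ W' := by
      rw [← hg'_map]
      exact Submodule.mem_map_of_mem hwW
    have hpwW' : pw ∈ W' := (W'.projectionOnto I hc'.symm (w : V)).2
    set d := g' (w : V) - pw with hd
    have hdW' : d ∈ W' := sub_mem hg'wW' hpwW'
    have hdR : d ∈ Rc φ ⊤ := by
      intro y _
      have hydec : (I.projectionOnto W' hc' y : V)
          + (W'.projectionOnto I hc'.symm y : V) = y :=
        Submodule.projection_add_projection_eq_self hc' y
      set b := I.projectionOnto W' hc' y with hb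
      set u' := W'.projectionOnto I hc'.symm y with hu'
      have t1 : φ (b : V) d = 0 := by
        have e1 : φ (b : V) (g' (w : V)) = φ (b : V) (w : V) := by
          conv_lhs => rw [← hg'_fixI (b : V) b.2]
          exact hg'_isom (b : V) (w : V)
        have e2 : φ (b : V) pw = φ (b : V) (w : V) := by
          rw [hpw, proj_eq_sub I W' hc' (w : V), map_sub]
          rw [hVinf_iso _ b.2 _ (I.projectionOnto W' hc' (w : V)).2]
          simp
        rw [hd, map_sub, e1, e2]
        simp
      have t2 : φ (u' : V) d = 0 := by
        rw [hd, map_sub]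
        rw [hW' _ u'.2 _ hg'wW', hW' _ u'.2 _ hpwW']
        simp
      rw [← hydec, map_add, LinearMap.add_apply, t1, t2, add_zero]
    have hdI : d ∈ I := Rc_top_le_Vinf φ hdR
    have hd0 : d = 0 := (Submodule.disjoint_def.mp hc'.disjoint) d hdI hdW'
    have : g' (w : V) = pw := by
      have := sub_eq_zero.mp hd0
      exact this
    rw [this, hgw]
  have goal_a : g' (a : V) = g (a : V) := by
    rw [hg'_fixI _ haI, hg_fixI _ haI]
  calc g'.toLinearMap x = g' ((a : V) + (w : V)) := by rw [hdec]; rfl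
    _ = g' (a : V) + g' (w : V) := map_add _ _ _
    _ = g (a : V) + g (w : V) := by rw [goal_a, goal_w]
    _ = g ((a : V) + (w : V)) := (map_add _ _ _).symm
    _ = g.toLinearMap x := by rw [hdec]; rfl
end
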